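/- Fix real numbers δ > 0, M > 0, R > 0 and 0 < r < R. Then there exist constants C > 0 and t₀ ∈ (0, 1] such that the following holds: for every t ∈ (0, t₀] and every function ζ that is continuous and non-negative on the closed disk {w ∈ ℂ : |w| ≤ R}, twice continuously differentiable on the open disk U = {w ∈ ℂ : |w| < R}, bounded above by M, and satisfies the differential inequality Δζ ≥ (δ/t) ζ − t at every point of U, one has ζ(w₀) ≤ C t² for every w₀ ∈ ℂ with |w₀| ≤ R − r. -/

import Mathlib

open Filter

/-- 1-D second derivative test (necessary condition) at a local max. -/
lemma aux_second_deriv_nonpos {g g' : ℝ → ℝ} {c : ℝ}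
    (hmax : IsLocalMax g 0) (hg : ∀ᶠ s in nhds (0:ℝ), HasDerivAt g (g' s) s)
    (hg' : HasDerivAt g' c 0) : c ≤ 0 := by
  by_contra hc
  push_neg at hc
  have h0 : g' 0 = 0 := hmax.hasDerivAt_eq_zero hg.self_of_nhds
  have hslope : Tendsto (slope g' 0) (nhdsWithin 0 {(0:ℝ)}ᶜ) (nhds c) :=
    hasDerivAt_iff_tendsto_slope.1 hg'
  have hpos : ∀ᶠ s in nhdsWithin 0 {(0:ℝ)}ᶜ, 0 < slope g' 0 s :=
    hslope.eventually (eventually_gt_nhds hc)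
  rw [eventually_nhdsWithin_iff] at hpos
  have hall : ∀ᶠ s in nhds (0:ℝ),
      HasDerivAt g (g' s) s ∧ g s ≤ g 0 ∧ (s ∈ ({(0:ℝ)}ᶜ : Set ℝ) → 0 < slope g' 0 s) :=
    hg.and (hmax.and hpos)
  rw [Metric.eventually_nhds_iff] at hall
  obtain ⟨ε, hε, hP⟩ := hall
  have hkey : ∀ s : ℝ, |s| < ε →
      HasDerivAt g (g' s) s ∧ g s ≤ g 0 ∧ (s ≠ 0 → 0 < slope g' 0 s) := by
    intro s hs
    have := hP (show dist s 0 < ε by simpa [Real.dist_eq] using hs)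
    simpa [Set.mem_compl_iff] using this
  have hmono : StrictMonoOn g (Set.Icc 0 (ε/2)) := by
    apply strictMonoOn_of_deriv_pos (convex_Icc _ _)
    · intro s hs
      have hs' : |s| < ε := by
        rw [abs_lt]; constructor <;> [linarith [hs.1]; linarith [hs.2]]
      exact ((hkey s hs').1.continuousAt).continuousWithinAt
    · intro s hs
      rw [interior_Icc] at hs
      have hs' : |s| < ε := by
        rw [abs_lt]; constructor <;> [linarith [hs.1]; linarith [hs.2]]
      obtain ⟨hd, _, hsl⟩ := hkey s hs'
      have hsl' := hsl (ne_of_gt hs.1)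
      rw [slope_def_field, h0] at hsl'
      have : 0 < g' s / s := by simpa using hsl'
      have hgs : 0 < g' s := by
        rcases div_pos_iff.1 this with ⟨h1, _⟩ | ⟨_, h2⟩
        · exact h1
        · linarith [hs.1]
      rwa [hd.deriv]
  have h1 : g 0 < g (ε/2) := by
    apply hmono (Set.left_mem_Icc.2 (by linarith)) (Set.right_mem_Icc.2 (by linarith))
    linarith
  have h2 : g (ε/2) ≤ g 0 := by
    have : |ε/2| < ε := by rw [abs_of_pos (by linarith)]; linarith
    exact (hkey _ this).2.1
  linarith

/-- Second directional derivative test at a local max in `ℂ`. -/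
lemma aux_second_dderiv_nonpos {F : ℂ → ℝ} {F' : ℂ → ℂ →L[ℝ] ℝ} {F'' : ℂ →L[ℝ] ℝ} {w v : ℂ}
    (hmax : IsLocalMax F w)
    (hF : ∀ᶠ z in nhds w, HasFDerivAt F (F' z) z)
    (hF' : HasFDerivAt (fun z => F' z v) F'' w) :
    F'' v ≤ 0 := by
  have hL : ∀ s : ℝ, HasDerivAt (fun s : ℝ => w + s • v) v s := by
    intro s
    simpa using ((hasDerivAt_id s).smul_const v).const_add w
  have hLc : Continuous fun s : ℝ => w + s • v := by fun_prop
  have hT : Tendsto (fun s : ℝ => w + s • v) (nhds 0) (nhds w) := by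
    have := hLc.tendsto 0
    simpa using this
  have hgmax : IsLocalMax (fun s : ℝ => F (w + s • v)) 0 := by
    have := hT.eventually hmax
    simpa [IsLocalMax, IsMaxFilter] using this
  have hg : ∀ᶠ s in nhds (0:ℝ), HasDerivAt (fun s : ℝ => F (w + s • v)) (F' (w + s • v) v) s := by
    filter_upwards [hT.eventually hF] with s hs
    exact hs.comp_hasDerivAt s (hL s)
  have hg' : HasDerivAt (fun s : ℝ => F' (w + s • v) v) (F'' v) 0 := by
    have h1 : HasFDerivAt (fun z => F' z v) F'' (w + (0:ℝ) • v) := by simpa using hF'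
    exact h1.comp_hasDerivAt 0 (hL 0)
  exact aux_second_deriv_nonpos hgmax hg hg'

lemma aux_deriv_cosh (a l x : ℝ) :
    HasDerivAt (fun x => a * Real.cosh (l * x)) (a * l * Real.sinh (l * x)) x := by
  have h1 : HasDerivAt (fun x : ℝ => l * x) l x := by
    simpa using (hasDerivAt_id x).const_mul l
  have h2 := (Real.hasDerivAt_cosh (l * x)).comp x h1
  have h3 := h2.const_mul a
  simpa [Function.comp, mul_comm, mul_assoc, mul_left_comm] using h3

lemma aux_deriv_sinh (a l x : ℝ) :
    HasDerivAt (fun x => a * Real.sinh (l * x)) (a * l * Real.cosh (l * x)) x := by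
  have h1 : HasDerivAt (fun x : ℝ => l * x) l x := by
    simpa using (hasDerivAt_id x).const_mul l
  have h2 := (Real.hasDerivAt_sinh (l * x)).comp x h1
  have h3 := h2.const_mul a
  simpa [Function.comp, mul_comm, mul_assoc, mul_left_comm] using h3

lemma aux_hasFDerivAt_re {g g' : ℝ → ℝ} (hg : ∀ x, HasDerivAt g (g' x) x) (c : ℝ) (z : ℂ) :
    HasFDerivAt (fun w : ℂ => g (w.re - c)) ((g' (z.re - c)) • (Complex.reCLM : ℂ →L[ℝ] ℝ)) z := by
  have h1 : HasFDerivAt (fun w : ℂ => w.re - c) (Complex.reCLM : ℂ →L[ℝ] ℝ) z :=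
    (Complex.reCLM.hasFDerivAt).sub_const c
  exact (hg (z.re - c)).comp_hasFDerivAt z h1

lemma aux_hasFDerivAt_im {g g' : ℝ → ℝ} (hg : ∀ x, HasDerivAt g (g' x) x) (c : ℝ) (z : ℂ) :
    HasFDerivAt (fun w : ℂ => g (w.im - c)) ((g' (z.im - c)) • (Complex.imCLM : ℂ →L[ℝ] ℝ)) z := by
  have h1 : HasFDerivAt (fun w : ℂ => w.im - c) (Complex.imCLM : ℂ →L[ℝ] ℝ) z :=
    (Complex.imCLM.hasFDerivAt).sub_const c
  exact (hg (z.im - c)).comp_hasFDerivAt z h1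

lemma aux_two_A_le {δ M r : ℝ} (hδ : 0 < δ) (hM : 0 < M) (hr : 0 < r) (t : ℝ) (ht : 0 < t)
    (ht0K : t ≤ δ^3 * r^6 / (1492992 * M)) :
    2 * (M / Real.cosh (Real.sqrt (δ / t) * (r / Real.sqrt 2))) ≤ t ^ 2 := by
  set l := Real.sqrt (δ / t) with hl
  set θ := l * (r / Real.sqrt 2) with hθ
  have hl2 : l ^ 2 = δ / t := Real.sq_sqrt (by positivity)
  have hθnn : 0 ≤ θ := by positivity
  have hcosh_pos := Real.cosh_pos θ
  -- exp θ ≥ (θ/6)^6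
  have hexp : (θ/6)^6 ≤ Real.exp θ := by
    have h1 : Real.exp θ = Real.exp (θ/6) ^ 6 := by
      rw [← Real.exp_nat_mul]
      congr 1
      push_cast
      ring
    have h2 : θ/6 ≤ Real.exp (θ/6) := by
      have := Real.add_one_le_exp (θ/6); linarith
    rw [h1]
    exact pow_le_pow_left₀ (by positivity) h2 6
  have hcosh_ge : θ^6 / 93312 ≤ Real.cosh θ := by
    have h1 : Real.exp θ / 2 ≤ Real.cosh θ := by
      rw [Real.cosh_eq]
      have := Real.exp_pos (-θ)
      linarith
    have : (θ/6)^6 = θ^6 / 46656 := by ring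
    linarith
  have hθ6 : θ ^ 6 = (δ/t)^3 * r^6 / 8 := by
    have hs2 : (Real.sqrt 2) ^ 6 = 8 := by
      have : (Real.sqrt 2) ^ 6 = ((Real.sqrt 2) ^ 2) ^ 3 := by ring
      rw [this, Real.sq_sqrt (by norm_num : (0:ℝ) ≤ 2)]
      norm_num
    have hl6 : l ^ 6 = (δ/t)^3 := by
      have : l ^ 6 = (l ^ 2) ^ 3 := by ring
      rw [this, hl2]
    rw [hθ, mul_pow, div_pow, hs2, hl6]
    ring
  have hkey : 1492992 * M * t ≤ δ^3 * r^6 := by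
    have := (le_div_iff₀ (by positivity : (0:ℝ) < 1492992 * M)).1 ht0K
    linarith
  have heq : t^2 * (θ^6 / 93312) = δ^3 * r^6 / (746496 * t) := by
    rw [hθ6]
    field_simp
    ring
  have h2M : 2 * M ≤ δ^3 * r^6 / (746496 * t) := by
    rw [le_div_iff₀ (by positivity)]
    linarith
  have hmul : t^2 * (θ^6/93312) ≤ t^2 * Real.cosh θ :=
    mul_le_mul_of_nonneg_left hcosh_ge (by positivity)
  have h2M' : 2 * M ≤ t^2 * Real.cosh θ := by
    rw [← heq] at h2M; linarith
  calc 2 * (M / Real.cosh θ) = 2 * M / Real.cosh θ := by ring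
    _ ≤ t^2 := by rw [div_le_iff₀ hcosh_pos]; linarith


/-- Lemma 6.4 of the paper: if a nonnegative bounded function `ζ` on a disk of
radius `R` in `ℂ ≅ ℝ²` satisfies `Δζ ≥ (δ/t) ζ − t`, then on the concentric disk
of radius `R − r` one has `ζ ≤ C t²` for all sufficiently small `t`, where `C`
depends only on `δ`, `M`, `R`, `r`. The Laplacian is expressed through second
directional derivatives in the directions `1` and `I`. -/
theorem sup_bound_from_differential_inequality
    (δ M R r : ℝ) (hδ : 0 < δ) (hM : 0 < M) (hR : 0 < R) (hr : 0 < r) (hrR : r < R) :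
    ∃ (C t₀ : ℝ), 0 < C ∧ 0 < t₀ ∧ t₀ ≤ 1 ∧
      ∀ t : ℝ, 0 < t → t ≤ t₀ →
      ∀ ζ : ℂ → ℝ,
        ContinuousOn ζ (Metric.closedBall (0 : ℂ) R) →
        ContDiffOn ℝ 2 ζ (Metric.ball (0 : ℂ) R) →
        (∀ w ∈ Metric.closedBall (0 : ℂ) R, 0 ≤ ζ w) →
        (∀ w ∈ Metric.closedBall (0 : ℂ) R, ζ w ≤ M) →
        (∀ w ∈ Metric.ball (0 : ℂ) R,
          (δ / t) * ζ w - t ≤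
            fderiv ℝ (fun z => fderiv ℝ ζ z 1) w 1 +
              fderiv ℝ (fun z => fderiv ℝ ζ z Complex.I) w Complex.I) →
        ∀ w₀ : ℂ, ‖w₀‖ ≤ R - r → ζ w₀ ≤ C * t ^ 2 := by
  refine ⟨1/δ + 1, min 1 (δ^3 * r^6 / (1492992 * M)), by positivity,
    lt_min one_pos (by positivity), min_le_left _ _, ?_⟩
  intro t ht ht₀ ζ hcont hC2 hpos hbd hΔ w₀ hw₀
  have ht1 : t ≤ 1 := le_trans ht₀ (min_le_left _ _)
  have ht0K : t ≤ δ^3 * r^6 / (1492992 * M) := le_trans ht₀ (min_le_right _ _)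
  set l := Real.sqrt (δ / t) with hldef
  have hl2 : l ^ 2 = δ / t := Real.sq_sqrt (by positivity)
  have hlpos : 0 < l := Real.sqrt_pos.2 (by positivity)
  set θ := l * (r / Real.sqrt 2) with hθdef
  have hθpos : 0 < θ := by positivity
  set A := M / Real.cosh θ with hAdef
  have hA : 0 < A := div_pos hM (Real.cosh_pos θ)
  have h2A : 2 * A ≤ t ^ 2 := by
    rw [hAdef, hθdef, hldef]
    exact aux_two_A_le hδ hM hr t ht ht0K
  have hMA : A * Real.cosh θ = M := by
    rw [hAdef, div_mul_cancel₀ _ (ne_of_gt (Real.cosh_pos θ))]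
  clear_value A θ l
  set φ : ℂ → ℝ :=
    fun z => A * Real.cosh (l * (z.re - w₀.re)) + A * Real.cosh (l * (z.im - w₀.im)) with hφdef
  -- lower bound for φ on the sphere
  have hterm : ∀ u : ℝ, r / Real.sqrt 2 ≤ |u| → M ≤ A * Real.cosh (l * u) := by
    intro u hu
    have hcc : Real.cosh θ ≤ Real.cosh (l * u) := by
      rw [Real.cosh_le_cosh, abs_of_pos hθpos, abs_mul, abs_of_pos hlpos, hθdef]
      exact mul_le_mul_of_nonneg_left hu hlpos.le
    calc M = A * Real.cosh θ := hMA.symm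
      _ ≤ A * Real.cosh (l * u) := mul_le_mul_of_nonneg_left hcc hA.le
  have hφ_sphere : ∀ z : ℂ, dist z w₀ = r → M + A ≤ φ z := by
    intro z hz
    have hz2 : (z.re - w₀.re)^2 + (z.im - w₀.im)^2 = r^2 := by
      rw [Complex.dist_eq] at hz
      have h2 : Complex.normSq (z - w₀) = r ^ 2 := by
        rw [← Complex.sq_norm, hz]
      simpa [Complex.normSq_apply, Complex.sub_re, Complex.sub_im, sq] using h2
    have habs : ∀ u : ℝ, r^2/2 ≤ u^2 → r / Real.sqrt 2 ≤ |u| := by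
      intro u hu
      have h1 : r / Real.sqrt 2 = Real.sqrt (r^2/2) := by
        rw [Real.sqrt_div (by positivity : (0:ℝ) ≤ r^2), Real.sqrt_sq hr.le]
      rw [h1, ← Real.sqrt_sq_eq_abs]
      exact Real.sqrt_le_sqrt hu
    rcases le_total ((z.re - w₀.re)^2) ((z.im - w₀.im)^2) with hc | hc
    · have him : r^2/2 ≤ (z.im - w₀.im)^2 := by nlinarith
      have h1 := hterm _ (habs _ him)
      have h2 : A * 1 ≤ A * Real.cosh (l * (z.re - w₀.re)) :=
        mul_le_mul_of_nonneg_left (Real.one_le_cosh _) hA.le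
      rw [hφdef]; dsimp only; linarith [h1, h2]
    · have hre : r^2/2 ≤ (z.re - w₀.re)^2 := by nlinarith
      have h1 := hterm _ (habs _ hre)
      have h2 : A * 1 ≤ A * Real.cosh (l * (z.im - w₀.im)) :=
        mul_le_mul_of_nonneg_left (Real.one_le_cosh _) hA.le
      rw [hφdef]; dsimp only; linarith [h1, h2]
  have hφw₀ : φ w₀ = 2 * A := by
    rw [hφdef]; simp [Real.cosh_zero]; ring
  have hφcont : Continuous φ := by rw [hφdef]; fun_prop
  clear_value φ
  -- the comparison function
  set F : ℂ → ℝ := fun z => ζ z - t^2/δ - φ z with hFdef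
  have hKsub : Metric.closedBall w₀ r ⊆ Metric.closedBall (0:ℂ) R := by
    intro z hz
    rw [Metric.mem_closedBall] at *
    have htri : dist z 0 ≤ dist z w₀ + dist w₀ 0 := dist_triangle _ _ _
    have hw₀' : dist w₀ 0 ≤ R - r := by
      rwa [Complex.dist_eq, sub_zero]
    linarith
  have hFcont : ContinuousOn F (Metric.closedBall w₀ r) := by
    rw [hFdef]
    exact ((hcont.mono hKsub).sub continuousOn_const).sub hφcont.continuousOn
  have hFeval : ∀ z, F z = ζ z - t^2/δ - φ z := by
    intro z; rw [hFdef]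
  clear_value F
  obtain ⟨w₁, hw₁K, hw₁max⟩ := (isCompact_closedBall w₀ r).exists_isMaxOn
    ⟨w₀, Metric.mem_closedBall_self hr.le⟩ hFcont
  by_cases hFw₁ : F w₁ ≤ 0
  · -- conclusion case
    have h1 : F w₀ ≤ 0 := le_trans (hw₁max (Metric.mem_closedBall_self hr.le)) hFw₁
    rw [hFeval] at h1
    have h3 : (1/δ + 1) * t^2 = t^2/δ + t^2 := by ring
    rw [hφw₀] at h1
    linarith
  · -- contradiction case
    exfalso
    push_neg at hFw₁
    have hζw₁le : ζ w₁ ≤ M := hbd w₁ (hKsub hw₁K)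
    have ht2δ : 0 < t^2/δ := by positivity
    have hw₁lt : dist w₁ w₀ < r := by
      rcases lt_or_eq_of_le (Metric.mem_closedBall.1 hw₁K) with h | h
      · exact h
      · exfalso
        have hs := hφ_sphere w₁ h
        have hFe := hFeval w₁
        linarith
    have hw₁ball : w₁ ∈ Metric.ball (0:ℂ) R := by
      rw [Metric.mem_ball]
      have htri : dist w₁ 0 ≤ dist w₁ w₀ + dist w₀ 0 := dist_triangle _ _ _
      have hw₀' : dist w₀ 0 ≤ R - r := by rwa [Complex.dist_eq, sub_zero]
      linarith
    have hball : IsOpen (Metric.ball (0:ℂ) R) := Metric.isOpen_ball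
    -- differentiability of ζ and its derivative
    have hζdiff : ∀ z ∈ Metric.ball (0:ℂ) R, HasFDerivAt ζ (fderiv ℝ ζ z) z := by
      intro z hz
      exact ((hC2.differentiableOn (by norm_num)).differentiableAt
        (hball.mem_nhds hz)).hasFDerivAt
    have hfd1 : ContDiffOn ℝ 1 (fderiv ℝ ζ) (Metric.ball (0:ℂ) R) :=
      hC2.fderiv_of_isOpen hball (by norm_num)
    have hDζdiff : ∀ v : ℂ, DifferentiableAt ℝ (fun z => fderiv ℝ ζ z v) w₁ := by
      intro v
      have h1 : DifferentiableAt ℝ (fderiv ℝ ζ) w₁ :=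
        (hfd1.differentiableOn one_ne_zero).differentiableAt (hball.mem_nhds hw₁ball)
      exact h1.clm_apply (differentiableAt_const v)
    -- derivative of the barrier
    set Dφ : ℂ → ℂ →L[ℝ] ℝ := fun z =>
      (A * l * Real.sinh (l * (z.re - w₀.re))) • (Complex.reCLM : ℂ →L[ℝ] ℝ) +
      (A * l * Real.sinh (l * (z.im - w₀.im))) • (Complex.imCLM : ℂ →L[ℝ] ℝ) with hDφdef
    have hφ1 : ∀ z, HasFDerivAt φ (Dφ z) z := by
      intro z
      rw [hφdef, hDφdef]
      exact (aux_hasFDerivAt_re (aux_deriv_cosh A l) w₀.re z).add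
        (aux_hasFDerivAt_im (aux_deriv_cosh A l) w₀.im z)
    have hDφ1 : (fun z => Dφ z 1) = fun z => A * l * Real.sinh (l * (z.re - w₀.re)) := by
      funext z
      rw [hDφdef]
      simp
    have hDφI : (fun z => Dφ z Complex.I) = fun z => A * l * Real.sinh (l * (z.im - w₀.im)) := by
      funext z
      rw [hDφdef]
      simp
    set F' : ℂ → ℂ →L[ℝ] ℝ := fun z => fderiv ℝ ζ z - Dφ z with hF'def
    have hF'1 : (fun z => F' z 1) = fun z => fderiv ℝ ζ z 1 - Dφ z 1 := by
      funext z; rw [hF'def]; simp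
    have hF'I : (fun z => F' z Complex.I) =
        fun z => fderiv ℝ ζ z Complex.I - Dφ z Complex.I := by
      funext z; rw [hF'def]; simp
    have hFder : ∀ z ∈ Metric.ball (0:ℂ) R, HasFDerivAt F (F' z) z := by
      intro z hz
      have h1 : HasFDerivAt (fun z => ζ z - t^2/δ - φ z) (fderiv ℝ ζ z - Dφ z) z :=
        ((hζdiff z hz).sub_const (t^2/δ)).sub (hφ1 z)
      rw [hF'def]
      have : F = fun z => ζ z - t^2/δ - φ z := funext hFeval
      rw [this]
      exact h1
    clear_value F'
    have hFev : ∀ᶠ z in nhds w₁, HasFDerivAt F (F' z) z :=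
      Filter.eventually_of_mem (hball.mem_nhds hw₁ball) hFder
    have hlocmax : IsLocalMax F w₁ :=
      hw₁max.isLocalMax (Filter.mem_of_superset
        (Metric.isOpen_ball.mem_nhds (Metric.mem_ball.2 hw₁lt)) Metric.ball_subset_closedBall)
    -- second derivative bounds in the two directions
    have hd1 : HasFDerivAt (fun z => F' z 1)
        (fderiv ℝ (fun z => fderiv ℝ ζ z 1) w₁ -
          (A * l * l * Real.cosh (l * (w₁.re - w₀.re))) • (Complex.reCLM : ℂ →L[ℝ] ℝ)) w₁ := by
      have ha : HasFDerivAt (fun z => fderiv ℝ ζ z 1)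
          (fderiv ℝ (fun z => fderiv ℝ ζ z 1) w₁) w₁ := (hDζdiff 1).hasFDerivAt
      have hb : HasFDerivAt (fun z => Dφ z 1)
          ((A * l * l * Real.cosh (l * (w₁.re - w₀.re))) • (Complex.reCLM : ℂ →L[ℝ] ℝ)) w₁ := by
        rw [hDφ1]
        exact aux_hasFDerivAt_re (aux_deriv_sinh (A * l) l) w₀.re w₁
      rw [hF'1]
      exact ha.sub hb
    have hdI : HasFDerivAt (fun z => F' z Complex.I)
        (fderiv ℝ (fun z => fderiv ℝ ζ z Complex.I) w₁ -
          (A * l * l * Real.cosh (l * (w₁.im - w₀.im))) • (Complex.imCLM : ℂ →L[ℝ] ℝ)) w₁ := by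
      have ha : HasFDerivAt (fun z => fderiv ℝ ζ z Complex.I)
          (fderiv ℝ (fun z => fderiv ℝ ζ z Complex.I) w₁) w₁ := (hDζdiff Complex.I).hasFDerivAt
      have hb : HasFDerivAt (fun z => Dφ z Complex.I)
          ((A * l * l * Real.cosh (l * (w₁.im - w₀.im))) • (Complex.imCLM : ℂ →L[ℝ] ℝ)) w₁ := by
        rw [hDφI]
        exact aux_hasFDerivAt_im (aux_deriv_sinh (A * l) l) w₀.im w₁
      rw [hF'I]
      exact ha.sub hb
    have h1 := aux_second_dderiv_nonpos hlocmax hFev hd1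
    have hI := aux_second_dderiv_nonpos hlocmax hFev hdI
    have h1' : fderiv ℝ (fun z => fderiv ℝ ζ z 1) w₁ 1 ≤
        A * l * l * Real.cosh (l * (w₁.re - w₀.re)) := by
      simpa [ContinuousLinearMap.sub_apply, ContinuousLinearMap.smul_apply,
        Complex.one_re, sub_nonpos] using h1
    have hI' : fderiv ℝ (fun z => fderiv ℝ ζ z Complex.I) w₁ Complex.I ≤
        A * l * l * Real.cosh (l * (w₁.im - w₀.im)) := by
      simpa [ContinuousLinearMap.sub_apply, ContinuousLinearMap.smul_apply,
        Complex.I_im, sub_nonpos] using hI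
    -- combine with the differential inequality
    have hΔ₁ := hΔ w₁ hw₁ball
    have hll : l * l = δ / t := by rw [← sq]; exact hl2
    have hφw₁ : φ w₁ = A * Real.cosh (l * (w₁.re - w₀.re)) +
        A * Real.cosh (l * (w₁.im - w₀.im)) := by rw [hφdef]
    have hsum : A * l * l * Real.cosh (l * (w₁.re - w₀.re)) +
        A * l * l * Real.cosh (l * (w₁.im - w₀.im)) = (δ/t) * φ w₁ := by
      rw [hφw₁, ← hll]; ring
    have hζeq : ζ w₁ = F w₁ + t^2/δ + φ w₁ := by
      rw [hFeval]; ring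
    have htδ : δ/t * (t^2/δ) = t := by
      field_simp
    have hfinal : (δ/t) * F w₁ ≤ 0 := by
      have hc : (δ/t) * ζ w₁ - t ≤ (δ/t) * φ w₁ := by linarith
      rw [hζeq, mul_add, mul_add, htδ] at hc
      linarith
    have : 0 < (δ/t) * F w₁ := mul_pos (by positivity) hFw₁
    linarith
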